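/- Let B, β, P, σ² and h be positive real constants, let K ⊂ ℝ² be a compact measurable set, and let ρ : ℝ² → ℝ be a continuous nonnegative function. For u, x ∈ ℝ² define ω(u, x) = 1 / ( B · log(1 + βP/(σ²(‖u − x‖² + h²))) / log 2 ). Then the function F : (ℝ²)^M → ℝ defined by F(u_1, …, u_M) = ∫_K ρ(x) · min_{1≤m≤M} ω(u_m, x) dx is continuously differentiable at every point (u_1, …, u_M) whose components are pairwise distinct. -/

import Mathlib

open MeasureTheory Metric Filter Topology

noncomputable section LocAux
namespace LocAux

abbrev E2 := EuclideanSpace ℝ (Fin 2)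

/-- The per-bit cost as a function of the displacement `w = u - x`. -/
noncomputable def Psi (B β P σsq h : ℝ) (w : E2) : ℝ :=
  1 / (B * Real.log (1 + β * P / (σsq * (‖w‖ ^ 2 + h ^ 2))) / Real.log 2)

variable {B β P σsq h : ℝ}

lemma den_pos (hB : 0 < B) (hβ : 0 < β) (hP : 0 < P) (hσ : 0 < σsq) (hh : 0 < h) (w : E2) :
    0 < B * Real.log (1 + β * P / (σsq * (‖w‖ ^ 2 + h ^ 2))) / Real.log 2 := by
  have h1 : (0:ℝ) < ‖w‖ ^ 2 + h ^ 2 := by positivity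
  have h2 : (0:ℝ) < β * P / (σsq * (‖w‖ ^ 2 + h ^ 2)) := by positivity
  have h3 : 0 < Real.log (1 + β * P / (σsq * (‖w‖ ^ 2 + h ^ 2))) :=
    Real.log_pos (by linarith)
  have h4 : (0:ℝ) < Real.log 2 := Real.log_pos (by norm_num)
  positivity

lemma contDiff_Psi (hB : 0 < B) (hβ : 0 < β) (hP : 0 < P) (hσ : 0 < σsq) (hh : 0 < h) :
    ContDiff ℝ 1 (Psi B β P σsq h) := by
  rw [contDiff_iff_contDiffAt]
  intro w
  have h1 : (0:ℝ) < ‖w‖ ^ 2 + h ^ 2 := by positivity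
  have hd : σsq * (‖w‖ ^ 2 + h ^ 2) ≠ 0 := by positivity
  have h2 : (0:ℝ) < β * P / (σsq * (‖w‖ ^ 2 + h ^ 2)) := by positivity
  have c0 : ContDiffAt ℝ 1 (fun w : E2 => σsq * (‖w‖ ^ 2 + h ^ 2)) w :=
    (contDiff_const.mul ((contDiff_norm_sq (𝕜 := ℝ)).add contDiff_const)).contDiffAt
  have c1 : ContDiffAt ℝ 1 (fun w : E2 => β * P / (σsq * (‖w‖ ^ 2 + h ^ 2))) w :=
    contDiffAt_const.div c0 hd
  have c2 : ContDiffAt ℝ 1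
      (fun w : E2 => Real.log (1 + β * P / (σsq * (‖w‖ ^ 2 + h ^ 2)))) w :=
    (contDiffAt_const.add c1).log (by positivity)
  have c3 : ContDiffAt ℝ 1
      (fun w : E2 => B * Real.log (1 + β * P / (σsq * (‖w‖ ^ 2 + h ^ 2))) / Real.log 2) w :=
    (contDiffAt_const.mul c2).div_const _
  exact contDiffAt_const.div c3 (ne_of_gt (den_pos hB hβ hP hσ hh w))

lemma Psi_le_Psi (hB : 0 < B) (hβ : 0 < β) (hP : 0 < P) (hσ : 0 < σsq) (hh : 0 < h)
    {w w' : E2} (hw : ‖w‖ ≤ ‖w'‖) : Psi B β P σsq h w ≤ Psi B β P σsq h w' := by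
  have h1 : (0:ℝ) < ‖w‖ ^ 2 + h ^ 2 := by positivity
  have h1' : (0:ℝ) < ‖w'‖ ^ 2 + h ^ 2 := by positivity
  have h2' : (0:ℝ) < β * P / (σsq * (‖w'‖ ^ 2 + h ^ 2)) := by positivity
  have key : B * Real.log (1 + β * P / (σsq * (‖w'‖ ^ 2 + h ^ 2))) / Real.log 2
      ≤ B * Real.log (1 + β * P / (σsq * (‖w‖ ^ 2 + h ^ 2))) / Real.log 2 := by
    have hsq : ‖w‖ ^ 2 ≤ ‖w'‖ ^ 2 := by
      have := norm_nonneg w; nlinarith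
    gcongr
  unfold Psi
  rw [one_div, one_div]
  exact inv_anti₀ (den_pos hB hβ hP hσ hh w') key

lemma Psi_lt_Psi (hB : 0 < B) (hβ : 0 < β) (hP : 0 < P) (hσ : 0 < σsq) (hh : 0 < h)
    {w w' : E2} (hw : ‖w‖ < ‖w'‖) : Psi B β P σsq h w < Psi B β P σsq h w' := by
  have h1 : (0:ℝ) < ‖w‖ ^ 2 + h ^ 2 := by positivity
  have h1' : (0:ℝ) < ‖w'‖ ^ 2 + h ^ 2 := by positivity
  have h2' : (0:ℝ) < β * P / (σsq * (‖w'‖ ^ 2 + h ^ 2)) := by positivity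
  have key : B * Real.log (1 + β * P / (σsq * (‖w'‖ ^ 2 + h ^ 2))) / Real.log 2
      < B * Real.log (1 + β * P / (σsq * (‖w‖ ^ 2 + h ^ 2))) / Real.log 2 := by
    have hsq : ‖w‖ ^ 2 < ‖w'‖ ^ 2 := by
      have := norm_nonneg w; nlinarith
    have hlt : β * P / (σsq * (‖w'‖ ^ 2 + h ^ 2)) < β * P / (σsq * (‖w‖ ^ 2 + h ^ 2)) := by
      gcongr
    have hlog := Real.log_lt_log (by linarith)
      (by linarith : 1 + β * P / (σsq * (‖w'‖ ^ 2 + h ^ 2))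
        < 1 + β * P / (σsq * (‖w‖ ^ 2 + h ^ 2)))
    have h4 : (0:ℝ) < Real.log 2 := Real.log_pos (by norm_num)
    gcongr
  unfold Psi
  rw [one_div, one_div]
  exact inv_strictAnti₀ (den_pos hB hβ hP hσ hh w') key

/-- value of a finite `iInf` at a minimizer -/
lemma ciInf_eq_of_min {ι : Type*} [Fintype ι] [Nonempty ι] {f : ι → ℝ} {i₀ : ι}
    (hle : ∀ i, f i₀ ≤ f i) : (⨅ i, f i) = f i₀ :=
  le_antisymm (ciInf_le (Set.finite_range f).bddBelow i₀) (le_ciInf hle)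

lemma abs_ciInf_sub_ciInf {ι : Type*} [Fintype ι] [Nonempty ι] {a b : ι → ℝ} {C : ℝ}
    (hC : ∀ i, |a i - b i| ≤ C) : |(⨅ i, a i) - ⨅ i, b i| ≤ C := by
  obtain ⟨i, hi⟩ := exists_eq_ciInf_of_finite (f := a)
  obtain ⟨j, hj⟩ := exists_eq_ciInf_of_finite (f := b)
  rw [abs_sub_le_iff]
  constructor
  · have h1 : (⨅ i, a i) ≤ a j := ciInf_le (Set.finite_range a).bddBelow j
    have h2 : a j - b j ≤ |a j - b j| := le_abs_self _
    have := hC j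
    rw [← hj]; linarith
  · have h1 : (⨅ i, b i) ≤ b i := ciInf_le (Set.finite_range b).bddBelow i
    have h2 : b i - a i ≤ |a i - b i| := by
      rw [abs_sub_comm]; exact le_abs_self _
    have := hC i
    rw [← hi]; linarith


section Voronoi

variable {M : ℕ}

/-- strict (open) Voronoi cell of agent `m` -/
def S (u : Fin M → E2) (m : Fin M) : Set E2 :=
  {x | ∀ m', m' ≠ m → ‖u m - x‖ < ‖u m' - x‖}

lemma isOpen_S (u : Fin M → E2) (m : Fin M) : IsOpen (S u m) := by
  have hS : S u m = ⋂ m', {x : E2 | m' ≠ m → ‖u m - x‖ < ‖u m' - x‖} := by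
    ext x; simp [S, Set.mem_iInter]
  rw [hS]
  refine isOpen_iInter_of_finite fun m' => ?_
  by_cases hm : m' = m
  · simp [hm]
  · have he : {x : E2 | m' ≠ m → ‖u m - x‖ < ‖u m' - x‖}
        = {x : E2 | ‖u m - x‖ < ‖u m' - x‖} := by
      ext x; simp [hm]
    rw [he]
    exact isOpen_lt ((continuous_const.sub continuous_id).norm)
      ((continuous_const.sub continuous_id).norm)

/-- the candidate derivative integrand -/
noncomputable def DD (B β P σsq h : ℝ) (ρ : E2 → ℝ) (u : Fin M → E2) (x : E2) :
    (Fin M → E2) →L[ℝ] ℝ :=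
  ∑ m, Set.indicator (S u m)
    (fun y => ρ y • ((fderiv ℝ (Psi B β P σsq h) (u m - y)).comp
      (ContinuousLinearMap.proj m))) x

lemma norm_proj_le (m : Fin M) :
    ‖(ContinuousLinearMap.proj m : (Fin M → E2) →L[ℝ] E2)‖ ≤ 1 :=
  ContinuousLinearMap.opNorm_le_bound _ zero_le_one fun u => by
    simpa using norm_le_pi_norm u m

lemma DD_eq_of_mem {ρ : E2 → ℝ} {u : Fin M → E2} {x : E2} {m₀ : Fin M}
    (hx : x ∈ S u m₀) :
    DD B β P σsq h ρ u x
      = ρ x • ((fderiv ℝ (Psi B β P σsq h) (u m₀ - x)).comp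
        (ContinuousLinearMap.proj m₀)) := by
  rw [DD, Finset.sum_eq_single m₀]
  · rw [Set.indicator_of_mem hx]
  · intro m _ hm
    have hnot : x ∉ S u m := by
      intro hxm
      have h1 := hx m hm
      have h2 := hxm m₀ (Ne.symm hm)
      exact absurd (h1.trans h2) (lt_irrefl _)
    rw [Set.indicator_of_notMem hnot]
  · intro hmem; exact absurd (Finset.mem_univ m₀) hmem

lemma norm_DD_le {C : ℝ} {R : ℝ} (hB : 0 < B) (hβ : 0 < β) (hP : 0 < P) (hσ : 0 < σsq)
    (hh : 0 < h) {ρ : E2 → ℝ} (hρ0 : ∀ x, 0 ≤ ρ x) {u : Fin M → E2} {x : E2}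
    (hC : ∀ w ∈ closedBall (0 : E2) R, ‖fderiv ℝ (Psi B β P σsq h) w‖ ≤ C)
    (hmem : ∀ m, u m - x ∈ closedBall (0 : E2) R) (hC0 : 0 ≤ C) : ‖DD B β P σsq h ρ u x‖ ≤ (M : ℝ) * (ρ x * C) := by
  have hterm : ∀ m : Fin M, ‖Set.indicator (S u m)
      (fun y => ρ y • ((fderiv ℝ (Psi B β P σsq h) (u m - y)).comp
        (ContinuousLinearMap.proj m : (Fin M → E2) →L[ℝ] E2))) x‖ ≤ ρ x * C := by
    intro m
    refine le_trans (norm_indicator_le_norm_self _ _) ?_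
    refine le_trans (ContinuousLinearMap.opNorm_smul_le (ρ x) _) ?_
    rw [Real.norm_eq_abs, abs_of_nonneg (hρ0 x)]
    refine mul_le_mul_of_nonneg_left ?_ (hρ0 x)
    refine le_trans (ContinuousLinearMap.opNorm_comp_le _ _) ?_
    calc ‖fderiv ℝ (Psi B β P σsq h) (u m - x)‖
          * ‖(ContinuousLinearMap.proj m : (Fin M → E2) →L[ℝ] E2)‖
        ≤ C * 1 := mul_le_mul (hC _ (hmem m)) (norm_proj_le m)
          (norm_nonneg _) hC0
      _ = C := mul_one C
  calc ‖DD B β P σsq h ρ u x‖ ≤ ∑ m : Fin M, ρ x * C := by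
        refine le_trans (norm_sum_le _ _) (Finset.sum_le_sum fun m _ => hterm m)
    _ = (M : ℝ) * (ρ x * C) := by simp [Finset.sum_const, Finset.card_univ, nsmul_eq_mul]

lemma ae_good {u : Fin M → E2} (hu : Function.Injective u) :
    ∀ᵐ x : E2, ∀ m m' : Fin M, m ≠ m' → ‖u m - x‖ ≠ ‖u m' - x‖ := by
  rw [ae_all_iff]
  intro m
  rw [ae_all_iff]
  intro m'
  by_cases hmm : m = m'
  · exact ae_of_all _ fun x hne => absurd hmm hne
  · have hne : u m ≠ u m' := fun he => hmm (hu he)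
    have h0 : volume {x : E2 | ‖u m - x‖ = ‖u m' - x‖} = 0 := by
      have hset : {x : E2 | ‖u m - x‖ = ‖u m' - x‖}
          = (AffineSubspace.perpBisector (u m) (u m') : Set E2) := by
        ext x
        rw [Set.mem_setOf_eq, SetLike.mem_coe,
          AffineSubspace.mem_perpBisector_iff_dist_eq, dist_eq_norm, dist_eq_norm,
          norm_sub_rev x (u m), norm_sub_rev x (u m')]
      rw [hset]
      exact Measure.addHaar_affineSubspace _ _ (by simpa using hne)
    have h1 : ∀ᵐ x : E2, ‖u m - x‖ ≠ ‖u m' - x‖ := by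
      rw [ae_iff]
      simpa [not_not] using h0
    exact h1.mono fun x hx _ => hx

lemma exists_strict_argmin [Nonempty (Fin M)] {u : Fin M → E2} {x : E2}
    (hx : ∀ m m' : Fin M, m ≠ m' → ‖u m - x‖ ≠ ‖u m' - x‖) :
    ∃ m₀, ∀ m, m ≠ m₀ → ‖u m₀ - x‖ < ‖u m - x‖ := by
  obtain ⟨m₀, hm₀⟩ := Finite.exists_min fun m => ‖u m - x‖
  exact ⟨m₀, fun m hm => lt_of_le_of_ne (hm₀ m) (hx m₀ m (Ne.symm hm))⟩

lemma iInf_Psi_eq [Nonempty (Fin M)] (hB : 0 < B) (hβ : 0 < β) (hP : 0 < P) (hσ : 0 < σsq)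
    (hh : 0 < h) {u : Fin M → E2} {x : E2} {m₀ : Fin M}
    (hmin : ∀ m', m' ≠ m₀ → ‖u m₀ - x‖ < ‖u m' - x‖) :
    (⨅ m, Psi B β P σsq h (u m - x)) = Psi B β P σsq h (u m₀ - x) := by
  refine ciInf_eq_of_min fun m => ?_
  by_cases hm : m = m₀
  · subst hm; exact le_rfl
  · exact Psi_le_Psi hB hβ hP hσ hh (le_of_lt (hmin m hm))

lemma continuous_inner_fun {ρ : E2 → ℝ} (hρc : Continuous ρ)
    (hfc : Continuous (fderiv ℝ (Psi B β P σsq h))) (u : Fin M → E2) (m : Fin M) :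
    Continuous (fun y : E2 => ρ y • ((fderiv ℝ (Psi B β P σsq h) (u m - y)).comp
      (ContinuousLinearMap.proj m : (Fin M → E2) →L[ℝ] E2))) := by
  have h1 : Continuous fun y : E2 => u m - y := continuous_const.sub continuous_id
  have h3 : Continuous fun y : E2 => (fderiv ℝ (Psi B β P σsq h) (u m - y)).comp
      (ContinuousLinearMap.proj m : (Fin M → E2) →L[ℝ] E2) :=
    (((ContinuousLinearMap.compL ℝ (Fin M → E2) E2 ℝ).flip
      (ContinuousLinearMap.proj m)).continuous).comp (hfc.comp h1)
  exact hρc.smul h3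

lemma aesm_DD {ρ : E2 → ℝ} (hρc : Continuous ρ)
    (hfc : Continuous (fderiv ℝ (Psi B β P σsq h))) (u : Fin M → E2) (μ : Measure E2) :
    AEStronglyMeasurable (fun x => DD B β P σsq h ρ u x) μ := by
  unfold DD
  refine Finset.aestronglyMeasurable_fun_sum _ fun m _ => ?_
  exact ((continuous_inner_fun hρc hfc u m).aestronglyMeasurable).indicator
    (isOpen_S u m).measurableSet

lemma isOpen_W (x : E2) (m₀ : Fin M) :
    IsOpen {u : Fin M → E2 | ∀ m', m' ≠ m₀ → ‖u m₀ - x‖ < ‖u m' - x‖} := by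
  have hS : {u : Fin M → E2 | ∀ m', m' ≠ m₀ → ‖u m₀ - x‖ < ‖u m' - x‖}
      = ⋂ m', {u : Fin M → E2 | m' ≠ m₀ → ‖u m₀ - x‖ < ‖u m' - x‖} := by
    ext u; simp [Set.mem_iInter]
  rw [hS]
  refine isOpen_iInter_of_finite fun m' => ?_
  by_cases hm : m' = m₀
  · simp [hm]
  · have he : {u : Fin M → E2 | m' ≠ m₀ → ‖u m₀ - x‖ < ‖u m' - x‖}
        = {u : Fin M → E2 | ‖u m₀ - x‖ < ‖u m' - x‖} := by
      ext u; simp [hm]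
    rw [he]
    exact isOpen_lt (((continuous_apply m₀).sub continuous_const).norm)
      (((continuous_apply m').sub continuous_const).norm)

lemma isOpen_injective : IsOpen {u : Fin M → E2 | Function.Injective u} := by
  have hS : {u : Fin M → E2 | Function.Injective u}
      = ⋂ m, ⋂ m', {u : Fin M → E2 | m ≠ m' → u m ≠ u m'} := by
    ext u
    simp only [Set.mem_setOf_eq, Set.mem_iInter]
    constructor
    · intro hu m m' hne he; exact hne (hu he)
    · intro H a b hab
      by_contra hne
      exact H a b hne hab
  rw [hS]
  refine isOpen_iInter_of_finite fun m => isOpen_iInter_of_finite fun m' => ?_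
  by_cases hmm : m = m'
  · simp [hmm]
  · have he : {u : Fin M → E2 | m ≠ m' → u m ≠ u m'}
        = {u : Fin M → E2 | u m ≠ u m'} := by ext u; simp [hmm]
    rw [he]
    exact isOpen_ne_fun (continuous_apply m) (continuous_apply m')

lemma continuous_G [Nonempty (Fin M)] {ρ : E2 → ℝ} (hρc : Continuous ρ)
    (hΨc : Continuous (Psi B β P σsq h)) (u : Fin M → E2) :
    Continuous fun x : E2 => ρ x * ⨅ m, Psi B β P σsq h (u m - x) := by
  have h2 : Continuous fun x : E2 => ⨅ m, Psi B β P σsq h (u m - x) := by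
    have h3 := Continuous.finset_inf'_apply (s := (Finset.univ : Finset (Fin M)))
      (f := fun m (x : E2) => Psi B β P σsq h (u m - x)) Finset.univ_nonempty
      (fun m _ => hΨc.comp (continuous_const.sub continuous_id))
    have h4 : (fun x : E2 => ⨅ m, Psi B β P σsq h (u m - x))
        = fun x : E2 => Finset.univ.inf' Finset.univ_nonempty
          (fun m => Psi B β P σsq h (u m - x)) := by
      funext x
      rw [Finset.inf'_univ_eq_ciInf]
    rw [h4]
    exact h3
  exact hρc.mul h2

end Voronoi
end LocAux
end LocAux

open LocAux in
/-- The locational cost `F(u₁,…,u_M) = ∫_K ρ(x) · min_m ω(u_m, x) dx`, with per-bit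
cost `ω(u,x) = 1/(B·log₂(1 + βP/(σ²(‖u-x‖² + h²))))` and altitude gap `h > 0`, is
continuously differentiable at every configuration with pairwise distinct
components. -/
theorem locational_cost_contDiffAt (B β P σsq h : ℝ)
    (hB : 0 < B) (hβ : 0 < β) (hP : 0 < P) (hσ : 0 < σsq) (hh : 0 < h)
    (M : ℕ) (hM : 1 ≤ M)
    (K : Set (EuclideanSpace ℝ (Fin 2))) (hK : IsCompact K) (hKm : MeasurableSet K)
    (ρ : EuclideanSpace ℝ (Fin 2) → ℝ) (hρc : Continuous ρ) (hρ0 : ∀ x, 0 ≤ ρ x)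
    (U : Fin M → EuclideanSpace ℝ (Fin 2)) (hU : Function.Injective U) :
    ContDiffAt ℝ 1
      (fun u : Fin M → EuclideanSpace ℝ (Fin 2) =>
        ∫ x in K, ρ x *
          ⨅ m, 1 / (B * Real.log (1 + β * P / (σsq * (‖u m - x‖ ^ 2 + h ^ 2)))
            / Real.log 2))
      U := by
  classical
  have : Nonempty (Fin M) := ⟨⟨0, hM⟩⟩
  show ContDiffAt ℝ 1
    (fun u : Fin M → E2 => ∫ x in K, ρ x * ⨅ m, Psi B β P σsq h (u m - x)) U
  have hΨ : ContDiff ℝ 1 (Psi B β P σsq h) := contDiff_Psi hB hβ hP hσ hh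
  have hΨd : Differentiable ℝ (Psi B β P σsq h) := hΨ.differentiable one_ne_zero
  have hfc : Continuous (fderiv ℝ (Psi B β P σsq h)) := hΨ.continuous_fderiv one_ne_zero
  obtain ⟨RK, hRK⟩ := hK.isBounded.subset_closedBall 0
  rw [contDiffAt_one_iff]
  refine ⟨fun u => ∫ x in K, DD B β P σsq h ρ u x,
    {u : Fin M → E2 | Function.Injective u},
    isOpen_injective.mem_nhds hU, ?_, ?_⟩
  · -- continuity of the derivative on the injective set
    intro u₀ hu₀
    refine ContinuousAt.continuousWithinAt ?_
    obtain ⟨C₀, hC₀⟩ := (isCompact_closedBall (0 : E2) (‖u₀‖ + 1 + RK)).exists_bound_of_continuousOn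
      hfc.continuousOn
    set C := max C₀ 0 with hCdef
    have hC : ∀ w ∈ closedBall (0 : E2) (‖u₀‖ + 1 + RK),
        ‖fderiv ℝ (Psi B β P σsq h) w‖ ≤ C := fun w hw => (hC₀ w hw).trans (le_max_left _ _)
    have hC0 : 0 ≤ C := le_max_right _ _
    have hmemball : ∀ u ∈ ball u₀ 1, ∀ x ∈ K, ∀ m : Fin M,
        u m - x ∈ closedBall (0 : E2) (‖u₀‖ + 1 + RK) := by
      intro u hu x hx m
      rw [mem_closedBall_zero_iff]
      have h1 : ‖u m‖ ≤ ‖u‖ := norm_le_pi_norm u m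
      have h2 : ‖u‖ - ‖u₀‖ ≤ ‖u - u₀‖ := norm_sub_norm_le u u₀
      have h3 : ‖u - u₀‖ < 1 := mem_ball_iff_norm.mp hu
      have h4 : ‖x‖ ≤ RK := mem_closedBall_zero_iff.mp (hRK hx)
      calc ‖u m - x‖ ≤ ‖u m‖ + ‖x‖ := norm_sub_le _ _
        _ ≤ ‖u₀‖ + 1 + RK := by linarith
    refine continuousAt_of_dominated (bound := fun x => (M : ℝ) * (ρ x * C))
      (Filter.Eventually.of_forall fun u => aesm_DD hρc hfc u _) ?_ ?_ ?_
    · refine Filter.eventually_of_mem (ball_mem_nhds u₀ one_pos) fun u hu => ?_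
      filter_upwards [ae_restrict_mem hKm] with x hx
      exact norm_DD_le hB hβ hP hσ hh hρ0 hC (fun m => hmemball u hu x hx m) hC0
    · exact ContinuousOn.integrableOn_compact hK
        ((continuous_const.mul (hρc.mul continuous_const)).continuousOn)
    · filter_upwards [ae_restrict_of_ae (ae_good hu₀)] with x hx
      obtain ⟨m₀, hm₀⟩ := exists_strict_argmin hx
      have hW : ∀ᶠ u in nhds u₀, ∀ m', m' ≠ m₀ → ‖u m₀ - x‖ < ‖u m' - x‖ :=
        (isOpen_W x m₀).mem_nhds hm₀
      have heq : (fun u : Fin M → E2 => DD B β P σsq h ρ u x)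
          =ᶠ[nhds u₀] (fun u : Fin M → E2 =>
            ρ x • ((fderiv ℝ (Psi B β P σsq h) (u m₀ - x)).comp
            (ContinuousLinearMap.proj m₀ : (Fin M → E2) →L[ℝ] E2))) :=
        hW.mono fun u hu => DD_eq_of_mem hu
      have hcont : ContinuousAt (fun u : Fin M → E2 =>
          ρ x • ((fderiv ℝ (Psi B β P σsq h) (u m₀ - x)).comp
            (ContinuousLinearMap.proj m₀ : (Fin M → E2) →L[ℝ] E2))) u₀ := by
        refine Continuous.continuousAt ?_
        exact (continuous_const (y := ρ x)).smul
          ((((ContinuousLinearMap.compL ℝ (Fin M → E2) E2 ℝ).flip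
            (ContinuousLinearMap.proj m₀)).continuous).comp
            (hfc.comp ((continuous_apply m₀).sub continuous_const :
              Continuous fun u : Fin M → E2 => u m₀ - x)))
      exact hcont.congr heq.symm
  · -- differentiability at each injective configuration
    intro u₀ hu₀
    obtain ⟨C₀, hC₀⟩ := (isCompact_closedBall (0 : E2) (‖u₀‖ + 1 + RK)).exists_bound_of_continuousOn
      hfc.continuousOn
    set C := max C₀ 0 with hCdef
    have hC : ∀ w ∈ closedBall (0 : E2) (‖u₀‖ + 1 + RK),
        ‖fderiv ℝ (Psi B β P σsq h) w‖ ≤ C := fun w hw => (hC₀ w hw).trans (le_max_left _ _)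
    have hC0 : 0 ≤ C := le_max_right _ _
    have hmemball : ∀ u ∈ ball u₀ 1, ∀ x ∈ K, ∀ m : Fin M,
        u m - x ∈ closedBall (0 : E2) (‖u₀‖ + 1 + RK) := by
      intro u hu x hx m
      rw [mem_closedBall_zero_iff]
      have h1 : ‖u m‖ ≤ ‖u‖ := norm_le_pi_norm u m
      have h2 : ‖u‖ - ‖u₀‖ ≤ ‖u - u₀‖ := norm_sub_norm_le u u₀
      have h3 : ‖u - u₀‖ < 1 := mem_ball_iff_norm.mp hu
      have h4 : ‖x‖ ≤ RK := mem_closedBall_zero_iff.mp (hRK hx)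
      calc ‖u m - x‖ ≤ ‖u m‖ + ‖x‖ := norm_sub_le _ _
        _ ≤ ‖u₀‖ + 1 + RK := by linarith
    have hlip : ∀ w ∈ closedBall (0 : E2) (‖u₀‖ + 1 + RK),
        ∀ w' ∈ closedBall (0 : E2) (‖u₀‖ + 1 + RK),
        ‖Psi B β P σsq h w - Psi B β P σsq h w'‖
          ≤ C * ‖w - w'‖ :=
      fun w hw w' hw' => Convex.norm_image_sub_le_of_norm_fderiv_le
        (fun z _ => hΨd z) hC (convex_closedBall _ _) hw' hw
    refine (hasFDerivAt_integral_of_dominated_loc_of_lip'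
      (F := fun (u : Fin M → E2) x => ρ x * ⨅ m, Psi B β P σsq h (u m - x))
      (F' := fun x => DD B β P σsq h ρ u₀ x)
      (bound := fun x => ρ x * C) (ball_mem_nhds u₀ one_pos) ?_ ?_ ?_ ?_ ?_ ?_).2
    · intro u _
      exact (continuous_G hρc (hΨ.continuous) u).aestronglyMeasurable
    · exact ContinuousOn.integrableOn_compact hK
        ((continuous_G hρc (hΨ.continuous) u₀).continuousOn)
    · exact aesm_DD hρc hfc u₀ _
    · filter_upwards [ae_restrict_mem hKm] with x hx
      intro u hu
      have key : |(⨅ m, Psi B β P σsq h (u m - x)) - ⨅ m, Psi B β P σsq h (u₀ m - x)|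
          ≤ C * ‖u - u₀‖ := by
        refine abs_ciInf_sub_ciInf fun m => ?_
        have h5 := hlip _ (hmemball u hu x hx m) _ (hmemball u₀ (mem_ball_self one_pos) x hx m)
        have h6 : (u m - x) - (u₀ m - x) = u m - u₀ m := by abel
        rw [h6] at h5
        have h7 : ‖u m - u₀ m‖ ≤ ‖u - u₀‖ := by
          have := norm_le_pi_norm (u - u₀) m
          simpa using this
        calc |Psi B β P σsq h (u m - x) - Psi B β P σsq h (u₀ m - x)|
            ≤ C * ‖u m - u₀ m‖ := h5
          _ ≤ C * ‖u - u₀‖ := by gcongr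
      calc ‖ρ x * (⨅ m, Psi B β P σsq h (u m - x))
            - ρ x * ⨅ m, Psi B β P σsq h (u₀ m - x)‖
          = ρ x * |(⨅ m, Psi B β P σsq h (u m - x)) - ⨅ m, Psi B β P σsq h (u₀ m - x)| := by
            rw [← mul_sub, Real.norm_eq_abs, abs_mul, abs_of_nonneg (hρ0 x)]
        _ ≤ ρ x * (C * ‖u - u₀‖) := by gcongr; exact hρ0 x
        _ = ρ x * C * ‖u - u₀‖ := by ring
    · exact ContinuousOn.integrableOn_compact hK ((hρc.mul continuous_const).continuousOn)
    · filter_upwards [ae_restrict_of_ae (ae_good hu₀)] with x hx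
      obtain ⟨m₀, hm₀⟩ := exists_strict_argmin hx
      have hxS : x ∈ S u₀ m₀ := hm₀
      have hW : ∀ᶠ u in nhds u₀, ∀ m', m' ≠ m₀ → ‖u m₀ - x‖ < ‖u m' - x‖ :=
        (isOpen_W x m₀).mem_nhds hm₀
      have heq : (fun u : Fin M → E2 => ρ x * ⨅ m, Psi B β P σsq h (u m - x))
          =ᶠ[nhds u₀] fun u : Fin M → E2 => ρ x * Psi B β P σsq h (u m₀ - x) :=
        hW.mono fun u hu => by
          show ρ x * (⨅ m, Psi B β P σsq h (u m - x)) = ρ x * Psi B β P σsq h (u m₀ - x)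
          rw [iInf_Psi_eq hB hβ hP hσ hh hu]
      have h1 : HasFDerivAt (fun u : Fin M → E2 => u m₀ - x)
          (ContinuousLinearMap.proj m₀ : (Fin M → E2) →L[ℝ] E2) u₀ :=
        (ContinuousLinearMap.proj m₀ : (Fin M → E2) →L[ℝ] E2).hasFDerivAt.sub_const x
      have h2 : HasFDerivAt (Psi B β P σsq h)
          (fderiv ℝ (Psi B β P σsq h) (u₀ m₀ - x)) (u₀ m₀ - x) := (hΨd _).hasFDerivAt
      have hD : HasFDerivAt (fun u : Fin M → E2 => ρ x * Psi B β P σsq h (u m₀ - x))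
          (ρ x • ((fderiv ℝ (Psi B β P σsq h) (u₀ m₀ - x)).comp
            (ContinuousLinearMap.proj m₀))) u₀ :=
        (h2.comp u₀ h1).const_mul (ρ x)
      rw [DD_eq_of_mem hxS]
      exact hD.congr_of_eventuallyEq heq
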